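/- (Anisotropic product estimate with vertical derivative) Let $G\subset\mathbb{R}^2$ be a bounded Lipschitz domain and $\mathcal{M}=G\times(p_0,p_1)$. There exists a constant $C>0$ such that for all $f,g\in L^2(p_0,p_1;H_0^1(G))$ and $h\in H^1(p_0,p_1;L^2(G))$, $$\int_{\mathcal{M}}|f||g||h|\,d\mathcal{M}\le C\|\nabla f\|_{L^2}^{1/2}\|f\|_{L^2}^{1/2}\|\nabla g\|_{L^2}^{1/2}\|g\|_{L^2}^{1/2}\big(\|h\|_{L^2}^{1/2}\|\partial_p h\|_{L^2}^{1/2}+\|h\|_{L^2}\big),$$ where $\nabla$ is the horizontal gradient. -/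

import Mathlib

open MeasureTheory Set Bornology Filter

section AuxiliaryLemmas

lemma sqrt_add_le {a b : ℝ} (ha : 0 ≤ a) (hb : 0 ≤ b) :
    Real.sqrt (a + b) ≤ Real.sqrt a + Real.sqrt b := by
  have h : a + b ≤ (Real.sqrt a + Real.sqrt b) ^ 2 := by
    nlinarith [Real.sq_sqrt ha, Real.sq_sqrt hb, Real.sqrt_nonneg a, Real.sqrt_nonneg b,
      mul_nonneg (Real.sqrt_nonneg a) (Real.sqrt_nonneg b)]
  calc Real.sqrt (a + b) ≤ Real.sqrt ((Real.sqrt a + Real.sqrt b) ^ 2) := Real.sqrt_le_sqrt h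
    _ = Real.sqrt a + Real.sqrt b := Real.sqrt_sq (by positivity)

lemma ftc_bound {w w' : ℝ → ℝ} (hw : ∀ t, HasDerivAt w (w' t) t) (hc : Continuous w')
    {a b p q : ℝ} (hp : p ∈ Icc a b) (hq : q ∈ Icc a b) :
    w p ≤ w q + ∫ t in Ioc a b, |w' t| := by
  have hint : IntegrableOn (fun t => |w' t|) (Ioc a b) := by
    exact (hc.abs.continuousOn.integrableOn_compact isCompact_Icc).mono_set Ioc_subset_Icc_self
  have h1 : ∫ t in q..p, w' t = w p - w q :=
    intervalIntegral.integral_eq_sub_of_hasDerivAt (fun x _ => hw x)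
      (hc.intervalIntegrable _ _)
  have h2 : |∫ t in q..p, w' t| ≤ ∫ t in Set.uIoc q p, |w' t| := by
    simpa [Real.norm_eq_abs] using intervalIntegral.norm_integral_le_integral_norm_uIoc
      (f := w') (a := q) (b := p) (μ := volume)
  have h3 : ∫ t in Set.uIoc q p, |w' t| ≤ ∫ t in Ioc a b, |w' t| := by
    refine setIntegral_mono_set hint (Eventually.of_forall fun t => abs_nonneg _) ?_
    refine HasSubset.Subset.eventuallyLE ?_
    rw [uIoc]
    exact Ioc_subset_Ioc (le_min hq.1 hp.1) (max_le hq.2 hp.2)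
  have := (le_abs_self _).trans (h2.trans h3)
  rw [h1] at this
  linarith [abs_sub_abs_le_abs_sub (w p) (w q)]

/-- FTC bound on the line for compactly supported functions. -/
lemma ftc_glob {w w' : ℝ → ℝ} (hw : ∀ t, HasDerivAt w (w' t) t) (hc : Continuous w')
    {R : ℝ} (h0 : ∀ t, R < |t| → w t = 0)
    (hint : Integrable (fun t => |w' t|)) (x : ℝ) :
    w x ≤ ∫ t, |w' t| := by
  set a := min x (-|R| - 1) with ha
  have hax : a ≤ x := min_le_left _ _
  have haR : R < |a| := by
    have h1 : a ≤ -|R| - 1 := min_le_right _ _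
    have h2 : |R| + 1 ≤ -a := by linarith
    have h3 : |R| + 1 ≤ |a| := h2.trans (neg_le_abs a)
    linarith [le_abs_self R]
  have hwa : w a = 0 := h0 a haR
  have h1 : ∫ t in a..x, w' t = w x - w a :=
    intervalIntegral.integral_eq_sub_of_hasDerivAt (fun t _ => hw t)
      (hc.intervalIntegrable _ _)
  have h2 : |∫ t in a..x, w' t| ≤ ∫ t in Set.uIoc a x, |w' t| := by
    simpa [Real.norm_eq_abs] using intervalIntegral.norm_integral_le_integral_norm_uIoc
      (f := w') (a := a) (b := x) (μ := volume)
  have h3 : ∫ t in Set.uIoc a x, |w' t| ≤ ∫ t, |w' t| :=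
    setIntegral_le_integral hint (Eventually.of_forall fun t => abs_nonneg _)
  have h4 := (le_abs_self _).trans (h2.trans h3)
  rw [h1, hwa, sub_zero] at h4
  exact h4

/-- 2D Ladyzhenskaya-type inequality, product form. -/
lemma lady (G : Set (ℝ × ℝ)) (hGb : IsBounded G)
    (u d1 d2 : ℝ × ℝ → ℝ) (hu : Continuous u) (hd1 : Continuous d1) (hd2 : Continuous d2)
    (h0 : ∀ z ∉ G, u z = 0)
    (h1 : ∀ y t, HasDerivAt (fun t => u (t, y)) (d1 (t, y)) t)
    (h2 : ∀ x s, HasDerivAt (fun s => u (x, s)) (d2 (x, s)) s) :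
    ∫ z, (u z) ^ 4 ≤
      4 * (∫ z, |u z| * |d1 z|) * (∫ z, |u z| * |d2 z|) := by
  obtain ⟨R, hR⟩ := hGb.subset_closedBall 0
  have hGz : ∀ z : ℝ × ℝ, z ∈ G → ‖z‖ ≤ R := by
    intro z hz
    have := hR hz
    rwa [Metric.mem_closedBall, dist_zero_right] at this
  have hzero : ∀ z : ℝ × ℝ, R < |z.1| ∨ R < |z.2| → u z = 0 := by
    intro z hz
    refine h0 z fun hzG => ?_
    have hn := hGz z hzG
    rcases hz with hz | hz
    · have : |z.1| ≤ R := le_trans (by simpa [Real.norm_eq_abs] using norm_fst_le z) hn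
      linarith
    · have : |z.2| ≤ R := le_trans (by simpa [Real.norm_eq_abs] using norm_snd_le z) hn
      linarith
  have hball : ∀ z : ℝ × ℝ, z ∉ Metric.closedBall (0 : ℝ × ℝ) R → u z = 0 := fun z hz =>
    h0 z fun hzG => hz (hR hzG)
  set φ1 : ℝ × ℝ → ℝ := fun z => |u z| * |d1 z| with hφ1def
  set φ2 : ℝ × ℝ → ℝ := fun z => |u z| * |d2 z| with hφ2def
  have hvol : (volume : Measure (ℝ × ℝ)) = (volume : Measure ℝ).prod volume :=
    Measure.volume_eq_prod ℝ ℝ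
  have hcs : ∀ {v : ℝ × ℝ → ℝ}, Continuous v → (∀ z, u z = 0 → v z = 0) → Integrable v := by
    intro v hvc hv0
    exact hvc.integrable_of_hasCompactSupport
      (HasCompactSupport.intro (isCompact_closedBall (0 : ℝ × ℝ) R)
        fun z hz => hv0 z (hball z hz))
  have hu4 : Integrable (fun z => u z ^ 4) :=
    hcs (hu.pow 4) fun z hz => by rw [hz]; ring
  have hφ1 : Integrable φ1 := hcs (hu.abs.mul hd1.abs) fun z hz => by
    simp only [hφ1def, hz]; simp
  have hφ2 : Integrable φ2 := hcs (hu.abs.mul hd2.abs) fun z hz => by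
    simp only [hφ2def, hz]; simp
  have hφ1p : Integrable φ1 ((volume : Measure ℝ).prod volume) := by rwa [← hvol]
  have hφ2p : Integrable φ2 ((volume : Measure ℝ).prod volume) := by rwa [← hvol]
  set F : ℝ → ℝ := fun y => ∫ t, φ1 (t, y) with hFdef
  set B : ℝ → ℝ := fun x => ∫ s, φ2 (x, s) with hBdef
  have hF : Integrable F := hφ1p.integral_prod_right
  have hB : Integrable B := hφ2p.integral_prod_left
  have hF0 : ∀ y, 0 ≤ F y := fun y =>
    integral_nonneg fun t => mul_nonneg (abs_nonneg _) (abs_nonneg _)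
  have hB0 : ∀ x, 0 ≤ B x := fun x =>
    integral_nonneg fun t => mul_nonneg (abs_nonneg _) (abs_nonneg _)
  -- pointwise bounds
  have key1 : ∀ x y : ℝ, u (x, y) ^ 2 ≤ 2 * F y := by
    intro x y
    have hw : ∀ t, HasDerivAt (fun t => u (t, y) ^ 2) (2 * u (t, y) * d1 (t, y)) t := by
      intro t
      have := (h1 y t).fun_pow 2
      simpa using this
    have hcw : Continuous (fun t : ℝ => 2 * u (t, y) * d1 (t, y)) := by
      have hcu : Continuous (fun t : ℝ => u (t, y)) :=
        hu.comp (continuous_id.prodMk continuous_const)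
      have hcd : Continuous (fun t : ℝ => d1 (t, y)) :=
        hd1.comp (continuous_id.prodMk continuous_const)
      exact (continuous_const.mul hcu).mul hcd
    have hzero' : ∀ t, R < |t| → u (t, y) ^ 2 = 0 := fun t ht => by
      rw [hzero (t, y) (Or.inl ht)]; ring
    have hint : Integrable (fun t : ℝ => |2 * u (t, y) * d1 (t, y)|) := by
      refine (hcw.abs).integrable_of_hasCompactSupport
        (HasCompactSupport.intro (isCompact_Icc (a := -R) (b := R)) fun t ht => ?_)
      have hta : R < |t| := by
        by_contra hle
        exact ht (mem_Icc.mpr (abs_le.mp (not_lt.mp hle)))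
      rw [hzero (t, y) (Or.inl hta)]
      simp
    have hftc := ftc_glob hw hcw hzero' hint x
    calc u (x, y) ^ 2 ≤ ∫ t, |2 * u (t, y) * d1 (t, y)| := hftc
      _ = 2 * F y := by
          rw [show (fun t => |2 * u (t, y) * d1 (t, y)|)
              = fun t => 2 * (|u (t, y)| * |d1 (t, y)|) from funext fun t => by
                rw [abs_mul, abs_mul, abs_two]; ring,
            integral_const_mul]
  have key2 : ∀ x y : ℝ, u (x, y) ^ 2 ≤ 2 * B x := by
    intro x y
    have hw : ∀ s, HasDerivAt (fun s => u (x, s) ^ 2) (2 * u (x, s) * d2 (x, s)) s := by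
      intro s
      have := (h2 x s).fun_pow 2
      simpa using this
    have hcw : Continuous (fun s : ℝ => 2 * u (x, s) * d2 (x, s)) := by
      have hcu : Continuous (fun s : ℝ => u (x, s)) :=
        hu.comp (continuous_const.prodMk continuous_id)
      have hcd : Continuous (fun s : ℝ => d2 (x, s)) :=
        hd2.comp (continuous_const.prodMk continuous_id)
      exact (continuous_const.mul hcu).mul hcd
    have hzero' : ∀ s, R < |s| → u (x, s) ^ 2 = 0 := fun s hs => by
      rw [hzero (x, s) (Or.inr hs)]; ring
    have hint : Integrable (fun s : ℝ => |2 * u (x, s) * d2 (x, s)|) := by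
      refine (hcw.abs).integrable_of_hasCompactSupport
        (HasCompactSupport.intro (isCompact_Icc (a := -R) (b := R)) fun s hs => ?_)
      have hta : R < |s| := by
        by_contra hle
        exact hs (mem_Icc.mpr (abs_le.mp (not_lt.mp hle)))
      rw [hzero (x, s) (Or.inr hta)]
      simp
    have hftc := ftc_glob hw hcw hzero' hint y
    calc u (x, y) ^ 2 ≤ ∫ s, |2 * u (x, s) * d2 (x, s)| := hftc
      _ = 2 * B x := by
          rw [show (fun s => |2 * u (x, s) * d2 (x, s)|)
              = fun s => 2 * (|u (x, s)| * |d2 (x, s)|) from funext fun s => by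
                rw [abs_mul, abs_mul, abs_two]; ring,
            integral_const_mul]
  have step1 : ∫ z, u z ^ 4 ≤ ∫ z : ℝ × ℝ, (2 * B z.1) * (2 * F z.2) := by
    refine integral_mono_of_nonneg (Eventually.of_forall fun z => by positivity) ?_ ?_
    · rw [hvol]
      exact (hB.const_mul 2).mul_prod (hF.const_mul 2)
    · refine Eventually.of_forall fun z => ?_
      obtain ⟨x, y⟩ := z
      calc u (x, y) ^ 4 = u (x, y) ^ 2 * u (x, y) ^ 2 := by ring
        _ ≤ (2 * B x) * (2 * F y) :=
            mul_le_mul (key2 x y) (key1 x y) (sq_nonneg _)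
              (by have := hB0 x; positivity)
  have step2 : ∫ z : ℝ × ℝ, (2 * B z.1) * (2 * F z.2)
      = 4 * (∫ z, φ1 z) * (∫ z, φ2 z) := by
    have e1 : ∫ z : ℝ × ℝ, (2 * B z.1) * (2 * F z.2) =
        (∫ x, 2 * B x) * (∫ y, 2 * F y) := by
      rw [hvol]; exact integral_prod_mul (fun x => 2 * B x) (fun y => 2 * F y)
    have hBint : ∫ x, B x = ∫ z, φ2 z := by
      conv_rhs => rw [hvol]
      rw [integral_prod _ hφ2p]
    have hFint : ∫ y, F y = ∫ z, φ1 z := by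
      conv_rhs => rw [hvol]
      rw [integral_prod_symm _ hφ1p]
    rw [e1, integral_const_mul, integral_const_mul, hBint, hFint]
    ring
  calc ∫ z, u z ^ 4 ≤ ∫ z : ℝ × ℝ, (2 * B z.1) * (2 * F z.2) := step1
    _ = 4 * (∫ z, φ1 z) * (∫ z, φ2 z) := step2

/-- Cauchy–Schwarz for integrals. -/
lemma cs_integral {α : Type*} [MeasurableSpace α] (μ : Measure α) {u v : α → ℝ}
    (hu : AEStronglyMeasurable u μ) (hv : AEStronglyMeasurable v μ)
    (hu2 : Integrable (fun x => u x ^ 2) μ) (hv2 : Integrable (fun x => v x ^ 2) μ) :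
    ∫ x, |u x| * |v x| ∂μ ≤ Real.sqrt (∫ x, u x ^ 2 ∂μ) * Real.sqrt (∫ x, v x ^ 2 ∂μ) := by
  have hpq : Real.HolderConjugate 2 2 := Real.HolderConjugate.two_two
  have hmu : MemLp u (ENNReal.ofReal 2) μ := by
    rw [show ENNReal.ofReal 2 = 2 by simp]
    exact (memLp_two_iff_integrable_sq hu).2 hu2
  have hmv : MemLp v (ENNReal.ofReal 2) μ := by
    rw [show ENNReal.ofReal 2 = 2 by simp]
    exact (memLp_two_iff_integrable_sq hv).2 hv2
  have hmain := integral_mul_norm_le_Lp_mul_Lq hpq hmu hmv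
  simp only [Real.norm_eq_abs] at hmain
  calc ∫ x, |u x| * |v x| ∂μ
      ≤ (∫ x, |u x| ^ (2:ℝ) ∂μ) ^ (1/(2:ℝ)) * (∫ x, |v x| ^ (2:ℝ) ∂μ) ^ (1/(2:ℝ)) := hmain
    _ = Real.sqrt (∫ x, u x ^ 2 ∂μ) * Real.sqrt (∫ x, v x ^ 2 ∂μ) := by
        rw [← Real.sqrt_eq_rpow, ← Real.sqrt_eq_rpow]
        congr 2
        · refine integral_congr_ae (Eventually.of_forall fun x => ?_)
          show |u x| ^ (2:ℝ) = u x ^ 2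
          rw [show (2:ℝ) = ((2:ℕ):ℝ) by norm_num, Real.rpow_natCast, sq_abs]
        · refine integral_congr_ae (Eventually.of_forall fun x => ?_)
          show |v x| ^ (2:ℝ) = v x ^ 2
          rw [show (2:ℝ) = ((2:ℕ):ℝ) by norm_num, Real.rpow_natCast, sq_abs]

lemma sqrt_mul_le_add {a b : ℝ} (ha : 0 ≤ a) (hb : 0 ≤ b) :
    Real.sqrt a * Real.sqrt b ≤ (a + b) / 2 := by
  nlinarith [Real.sq_sqrt ha, Real.sq_sqrt hb, sq_nonneg (Real.sqrt a - Real.sqrt b),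
    Real.sqrt_nonneg a, Real.sqrt_nonneg b]

/-- Ladyzhenskaya on a bounded set, with `L²` norms. -/
lemma lady2 (G : Set (ℝ × ℝ)) (hGb : IsBounded G) (hGm : MeasurableSet G)
    (u d1 d2 : ℝ × ℝ → ℝ) (hu : Continuous u) (hd1 : Continuous d1) (hd2 : Continuous d2)
    (h0 : ∀ z ∉ G, u z = 0)
    (h1 : ∀ y t, HasDerivAt (fun t => u (t, y)) (d1 (t, y)) t)
    (h2 : ∀ x s, HasDerivAt (fun s => u (x, s)) (d2 (x, s)) s) :
    ∫ x, u x ^ 4 ∂(volume.restrict G) ≤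
      2 * (∫ x, u x ^ 2 ∂(volume.restrict G)) *
        (∫ x, (d1 x ^ 2 + d2 x ^ 2) ∂(volume.restrict G)) := by
  have intG : ∀ {v : ℝ × ℝ → ℝ}, Continuous v → Integrable v (volume.restrict G) := by
    intro v hv
    exact ((hv.continuousOn.integrableOn_compact hGb.isCompact_closure).mono_set
      subset_closure : IntegrableOn v G volume)
  -- convert the full-plane integrals of `lady` to integrals over `G`
  have conv4 : ∫ z, u z ^ 4 = ∫ x, u x ^ 4 ∂(volume.restrict G) :=
    (setIntegral_eq_integral_of_forall_compl_eq_zero fun z hz => by rw [h0 z hz]; ring).symm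
  have conv2 : ∫ z, u z ^ 2 = ∫ x, u x ^ 2 ∂(volume.restrict G) :=
    (setIntegral_eq_integral_of_forall_compl_eq_zero fun z hz => by rw [h0 z hz]; ring).symm
  have convd1 : ∫ z, |u z| * |d1 z| = ∫ x, |u x| * |d1 x| ∂(volume.restrict G) :=
    (setIntegral_eq_integral_of_forall_compl_eq_zero fun z hz => by rw [h0 z hz]; simp).symm
  have convd2 : ∫ z, |u z| * |d2 z| = ∫ x, |u x| * |d2 x| ∂(volume.restrict G) :=
    (setIntegral_eq_integral_of_forall_compl_eq_zero fun z hz => by rw [h0 z hz]; simp).symm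
  have hlady := lady G hGb u d1 d2 hu hd1 hd2 h0 h1 h2
  rw [conv4, convd1, convd2] at hlady
  set μ := volume.restrict G
  have hA := cs_integral μ hu.aestronglyMeasurable hd1.aestronglyMeasurable
    (intG (hu.pow 2)) (intG (hd1.pow 2))
  have hB := cs_integral μ hu.aestronglyMeasurable hd2.aestronglyMeasurable
    (intG (hu.pow 2)) (intG (hd2.pow 2))
  have hA0 : 0 ≤ ∫ x, |u x| * |d1 x| ∂μ :=
    integral_nonneg fun x => mul_nonneg (abs_nonneg _) (abs_nonneg _)
  have hB0 : 0 ≤ ∫ x, |u x| * |d2 x| ∂μ :=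
    integral_nonneg fun x => mul_nonneg (abs_nonneg _) (abs_nonneg _)
  have hadd : ∫ x, (d1 x ^ 2 + d2 x ^ 2) ∂μ = (∫ x, d1 x ^ 2 ∂μ) + ∫ x, d2 x ^ 2 ∂μ :=
    integral_add (intG (hd1.pow 2)) (intG (hd2.pow 2))
  have hu20 : 0 ≤ ∫ x, u x ^ 2 ∂μ := integral_nonneg fun x => sq_nonneg _
  have hd10 : 0 ≤ ∫ x, d1 x ^ 2 ∂μ := integral_nonneg fun x => sq_nonneg _
  have hd20 : 0 ≤ ∫ x, d2 x ^ 2 ∂μ := integral_nonneg fun x => sq_nonneg _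
  have hAB : (∫ x, |u x| * |d1 x| ∂μ) * (∫ x, |u x| * |d2 x| ∂μ) ≤
      (Real.sqrt (∫ x, u x ^ 2 ∂μ) * Real.sqrt (∫ x, d1 x ^ 2 ∂μ)) *
      (Real.sqrt (∫ x, u x ^ 2 ∂μ) * Real.sqrt (∫ x, d2 x ^ 2 ∂μ)) :=
    mul_le_mul hA hB hB0 (by positivity)
  have hs : Real.sqrt (∫ x, u x ^ 2 ∂μ) * Real.sqrt (∫ x, u x ^ 2 ∂μ) = ∫ x, u x ^ 2 ∂μ :=
    Real.mul_self_sqrt hu20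
  have hgm : Real.sqrt (∫ x, d1 x ^ 2 ∂μ) * Real.sqrt (∫ x, d2 x ^ 2 ∂μ) ≤
      ((∫ x, d1 x ^ 2 ∂μ) + ∫ x, d2 x ^ 2 ∂μ) / 2 := sqrt_mul_le_add hd10 hd20
  rw [hadd]
  nlinarith [Real.sqrt_nonneg (∫ x, u x ^ 2 ∂μ), Real.sqrt_nonneg (∫ x, d1 x ^ 2 ∂μ),
    Real.sqrt_nonneg (∫ x, d2 x ^ 2 ∂μ)]

end AuxiliaryLemmas


/-- The `L²` norm of a function over a subset of `(ℝ × ℝ) × ℝ`. -/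
noncomputable def L2normOn (M : Set ((ℝ × ℝ) × ℝ)) (f : ((ℝ × ℝ) × ℝ) → ℝ) : ℝ :=
  Real.sqrt (∫ z in M, (f z) ^ 2)

/-- The `L²` norm of the horizontal gradient over a subset of `(ℝ × ℝ) × ℝ`. -/
noncomputable def gradHnormOn (M : Set ((ℝ × ℝ) × ℝ)) (f : ((ℝ × ℝ) × ℝ) → ℝ) : ℝ :=
  Real.sqrt (∫ z in M,
    ((fderiv ℝ f z ((1, 0), 0)) ^ 2 + (fderiv ℝ f z ((0, 1), 0)) ^ 2))

/-- The `L²` norm of the vertical derivative over a subset of `(ℝ × ℝ) × ℝ`. -/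
noncomputable def vertDnormOn (M : Set ((ℝ × ℝ) × ℝ)) (f : ((ℝ × ℝ) × ℝ) → ℝ) : ℝ :=
  Real.sqrt (∫ z in M, (fderiv ℝ f z ((0, 0), 1)) ^ 2)

set_option maxHeartbeats 1000000 in
theorem anisotropic_product_vertical (G : Set (ℝ × ℝ)) (hGo : IsOpen G)
    (hGb : Bornology.IsBounded G) (p0 p1 : ℝ) (hp01 : p0 < p1) :
    ∃ C > (0:ℝ), ∀ f g h : ((ℝ × ℝ) × ℝ) → ℝ,
      ContDiff ℝ 1 f → ContDiff ℝ 1 g → ContDiff ℝ 1 h →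
      (∀ x : ℝ × ℝ, x ∉ G → ∀ p : ℝ, f (x, p) = 0) →
      (∀ x : ℝ × ℝ, x ∉ G → ∀ p : ℝ, g (x, p) = 0) →
      (∫ z in G ×ˢ Set.Ioo p0 p1, |f z| * |g z| * |h z|) ≤
        C * (gradHnormOn (G ×ˢ Set.Ioo p0 p1) f) ^ ((1:ℝ)/2) *
          (L2normOn (G ×ˢ Set.Ioo p0 p1) f) ^ ((1:ℝ)/2) *
          (gradHnormOn (G ×ˢ Set.Ioo p0 p1) g) ^ ((1:ℝ)/2) *
          (L2normOn (G ×ˢ Set.Ioo p0 p1) g) ^ ((1:ℝ)/2) *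
          ((L2normOn (G ×ˢ Set.Ioo p0 p1) h) ^ ((1:ℝ)/2) *
              (vertDnormOn (G ×ˢ Set.Ioo p0 p1) h) ^ ((1:ℝ)/2)
            + L2normOn (G ×ˢ Set.Ioo p0 p1) h) := by
  have hL : (0:ℝ) < p1 - p0 := by linarith
  refine ⟨Real.sqrt 2 * (Real.sqrt 2 + 1 / Real.sqrt (p1 - p0)), by positivity, ?_⟩
  intro f g h hf hg hh hf0 hg0
  have hfc : Continuous f := hf.continuous
  have hgc : Continuous g := hg.continuous
  have hhc : Continuous h := hh.continuous
  have hDC : ∀ {u : (ℝ×ℝ)×ℝ → ℝ}, ContDiff ℝ 1 u →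
      ∀ v : (ℝ×ℝ)×ℝ, Continuous fun z => fderiv ℝ u z v := fun hu v =>
    (hu.continuous_fderiv one_ne_zero).clm_apply continuous_const
  set I := Set.Ioo p0 p1 with hIdef
  have hIm : MeasurableSet I := measurableSet_Ioo
  set μG := volume.restrict G with hmuG
  set μI := volume.restrict I with hmuI
  have hπ : μG.prod μI = volume.restrict (G ×ˢ I) := by
    rw [hmuG, hmuI, Measure.prod_restrict]
    rw [← Measure.volume_eq_prod]
  have hμIfin : IsFiniteMeasure μI := by
    constructor
    rw [hmuI, Measure.restrict_apply_univ, hIdef, Real.volume_Ioo]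
    exact ENNReal.ofReal_lt_top
  have hμIvol : (μI Set.univ).toReal = p1 - p0 := by
    rw [hmuI, Measure.restrict_apply_univ, hIdef, Real.volume_Ioo,
      ENNReal.toReal_ofReal hL.le]
  have hMb : IsBounded (G ×ˢ I) := hGb.prod (Metric.isBounded_Ioo p0 p1)
  have intM : ∀ {F : (ℝ×ℝ)×ℝ → ℝ}, Continuous F → Integrable F (μG.prod μI) := by
    intro F hF
    rw [hπ]
    exact (hF.continuousOn.integrableOn_compact hMb.isCompact_closure).mono_set subset_closure
  have intG : ∀ {v : ℝ×ℝ → ℝ}, Continuous v → Integrable v μG := by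
    intro v hv
    rw [hmuG]
    exact (hv.continuousOn.integrableOn_compact hGb.isCompact_closure).mono_set subset_closure
  have fub : ∀ {F : (ℝ×ℝ)×ℝ → ℝ}, Continuous F →
      ∫ z, F z ∂(μG.prod μI) = ∫ p, (∫ x, F (x, p) ∂μG) ∂μI :=
    fun {F} hF => integral_prod_symm F (intM hF)
  have sqrt_int : ∀ {w : ℝ → ℝ}, Integrable w μI → (∀ p, 0 ≤ w p) →
      Integrable (fun p => Real.sqrt (w p)) μI := by
    intro w hw hw0
    have hmaj : Integrable (fun p => 1 + w p) μI := (integrable_const 1).add hw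
    refine hmaj.mono' (Real.continuous_sqrt.comp_aestronglyMeasurable hw.1)
      (Eventually.of_forall fun p => ?_)
    rw [Real.norm_eq_abs, abs_of_nonneg (Real.sqrt_nonneg _)]
    nlinarith [Real.sq_sqrt (hw0 p), Real.sqrt_nonneg (w p),
      sq_nonneg (Real.sqrt (w p) - 1)]
  have mul_int : ∀ {w1 w2 : ℝ → ℝ}, Integrable w1 μI → Integrable w2 μI →
      (∀ p, 0 ≤ w1 p) → (∀ p, 0 ≤ w2 p) →
      Integrable (fun p => Real.sqrt (w1 p) * Real.sqrt (w2 p)) μI := by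
    intro w1 w2 h1 h2 h10 h20
    have hmaj : Integrable (fun p => (w1 p + w2 p) / 2) μI := (h1.add h2).div_const 2
    refine hmaj.mono' ((Real.continuous_sqrt.comp_aestronglyMeasurable h1.1).mul
      (Real.continuous_sqrt.comp_aestronglyMeasurable h2.1))
      (Eventually.of_forall fun p => ?_)
    rw [Real.norm_eq_abs, abs_of_nonneg (by positivity)]
    exact sqrt_mul_le_add (h10 p) (h20 p)
  have cs_sqrt : ∀ {w1 w2 : ℝ → ℝ}, Integrable w1 μI → Integrable w2 μI →
      (∀ p, 0 ≤ w1 p) → (∀ p, 0 ≤ w2 p) →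
      ∫ p, Real.sqrt (w1 p) * Real.sqrt (w2 p) ∂μI ≤
        Real.sqrt (∫ p, w1 p ∂μI) * Real.sqrt (∫ p, w2 p ∂μI) := by
    intro w1 w2 h1 h2 h10 h20
    have e1 : (fun p => (Real.sqrt (w1 p)) ^ 2) =ᵐ[μI] w1 :=
      Eventually.of_forall fun p => Real.sq_sqrt (h10 p)
    have e2 : (fun p => (Real.sqrt (w2 p)) ^ 2) =ᵐ[μI] w2 :=
      Eventually.of_forall fun p => Real.sq_sqrt (h20 p)
    have hcs := cs_integral μI (Real.continuous_sqrt.comp_aestronglyMeasurable h1.1)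
      (Real.continuous_sqrt.comp_aestronglyMeasurable h2.1)
      (h1.congr e1.symm) (h2.congr e2.symm)
    calc ∫ p, Real.sqrt (w1 p) * Real.sqrt (w2 p) ∂μI
        = ∫ p, |Real.sqrt (w1 p)| * |Real.sqrt (w2 p)| ∂μI := by
          refine integral_congr_ae (Eventually.of_forall fun p => ?_)
          show Real.sqrt (w1 p) * Real.sqrt (w2 p) = |Real.sqrt (w1 p)| * |Real.sqrt (w2 p)|
          rw [abs_of_nonneg (Real.sqrt_nonneg _), abs_of_nonneg (Real.sqrt_nonneg _)]
      _ ≤ Real.sqrt (∫ p, (Real.sqrt (w1 p)) ^ 2 ∂μI) *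
            Real.sqrt (∫ p, (Real.sqrt (w2 p)) ^ 2 ∂μI) := hcs
      _ = Real.sqrt (∫ p, w1 p ∂μI) * Real.sqrt (∫ p, w2 p ∂μI) := by
          rw [integral_congr_ae e1, integral_congr_ae e2]
  -- per-slice Ladyzhenskaya
  have slice_lady : ∀ (u : (ℝ×ℝ)×ℝ → ℝ), ContDiff ℝ 1 u →
      (∀ x : ℝ×ℝ, x ∉ G → ∀ p : ℝ, u (x, p) = 0) → ∀ p : ℝ,
      ∫ x, u (x, p) ^ 4 ∂μG ≤
        2 * (∫ x, u (x, p) ^ 2 ∂μG) *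
          (∫ x, ((fderiv ℝ u (x, p) ((1,0),0)) ^ 2 + (fderiv ℝ u (x, p) ((0,1),0)) ^ 2) ∂μG) := by
    intro u hu hu0 p
    have huc : Continuous u := hu.continuous
    have hDc := hDC hu
    rw [hmuG]
    refine lady2 G hGb hGo.measurableSet (fun x => u (x, p))
      (fun x => fderiv ℝ u (x, p) ((1,0),0)) (fun x => fderiv ℝ u (x, p) ((0,1),0))
      (huc.comp (continuous_id.prodMk continuous_const))
      ((hDc ((1,0),0)).comp (continuous_id.prodMk continuous_const))
      ((hDc ((0,1),0)).comp (continuous_id.prodMk continuous_const))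
      (fun x hx => hu0 x hx p) ?_ ?_
    · intro y t
      have hc : HasDerivAt (fun t : ℝ => (((t, y) : ℝ×ℝ), p))
          ((((1:ℝ),(0:ℝ)), (0:ℝ))) t :=
        ((hasDerivAt_id t).prodMk (hasDerivAt_const t y)).prodMk (hasDerivAt_const t p)
      exact (hu.differentiable one_ne_zero ((t, y), p)).hasFDerivAt.comp_hasDerivAt t hc
    · intro x s
      have hc : HasDerivAt (fun s : ℝ => (((x, s) : ℝ×ℝ), p))
          ((((0:ℝ),(1:ℝ)), (0:ℝ))) s :=
        ((hasDerivAt_const s x).prodMk (hasDerivAt_id s)).prodMk (hasDerivAt_const s p)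
      exact (hu.differentiable one_ne_zero ((x, s), p)).hasFDerivAt.comp_hasDerivAt s hc

  -- nonnegativity helpers
  have nn2 : ∀ (u : (ℝ×ℝ)×ℝ → ℝ) (p : ℝ), 0 ≤ ∫ x, u (x,p) ^ 2 ∂μG :=
    fun u p => integral_nonneg fun x => sq_nonneg _
  have nn4 : ∀ (u : (ℝ×ℝ)×ℝ → ℝ) (p : ℝ), 0 ≤ ∫ x, u (x,p) ^ 4 ∂μG :=
    fun u p => integral_nonneg fun x => by positivity
  have nnPhi : ∀ (u : (ℝ×ℝ)×ℝ → ℝ) (p : ℝ), 0 ≤ ∫ x,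
      ((fderiv ℝ u (x,p) ((1,0),0))^2 + (fderiv ℝ u (x,p) ((0,1),0))^2) ∂μG :=
    fun u p => integral_nonneg fun x => by positivity
  -- L⁴-in-slices estimate
  have keyL4 : ∀ (u : (ℝ×ℝ)×ℝ → ℝ), ContDiff ℝ 1 u → Continuous u →
      (∀ x : ℝ×ℝ, x ∉ G → ∀ p : ℝ, u (x, p) = 0) →
      ∫ p, Real.sqrt (∫ x, u (x,p) ^ 4 ∂μG) ∂μI ≤
        Real.sqrt 2 * (Real.sqrt (∫ z, u z ^ 2 ∂(μG.prod μI)) *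
          Real.sqrt (∫ z, ((fderiv ℝ u z ((1,0),0))^2 + (fderiv ℝ u z ((0,1),0))^2)
            ∂(μG.prod μI))) := by
    intro u hu huc hu0
    have intpsi : Integrable (fun p => ∫ x, u (x,p)^2 ∂μG) μI :=
      (intM (huc.pow 2)).integral_prod_right
    have intPhi : Integrable (fun p => ∫ x, ((fderiv ℝ u (x,p) ((1,0),0))^2
        + (fderiv ℝ u (x,p) ((0,1),0))^2) ∂μG) μI :=
      (intM (((hDC hu ((1,0),0)).pow 2).add ((hDC hu ((0,1),0)).pow 2))).integral_prod_right
    have intF4 : Integrable (fun p => ∫ x, u (x,p)^4 ∂μG) μI :=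
      (intM (huc.pow 4)).integral_prod_right
    have haf : ∀ p, Real.sqrt (∫ x, u (x,p)^4 ∂μG) ≤
        Real.sqrt 2 * (Real.sqrt (∫ x, u (x,p)^2 ∂μG) *
          Real.sqrt (∫ x, ((fderiv ℝ u (x,p) ((1,0),0))^2
            + (fderiv ℝ u (x,p) ((0,1),0))^2) ∂μG)) := by
      intro p
      have hsl := slice_lady u hu hu0 p
      calc Real.sqrt (∫ x, u (x,p)^4 ∂μG) ≤
          Real.sqrt (2 * (∫ x, u (x,p)^2 ∂μG) *
            (∫ x, ((fderiv ℝ u (x,p) ((1,0),0))^2 + (fderiv ℝ u (x,p) ((0,1),0))^2) ∂μG)) :=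
            Real.sqrt_le_sqrt hsl
        _ = _ := by
            rw [Real.sqrt_mul (mul_nonneg (by norm_num) (nn2 u p)),
              Real.sqrt_mul (by norm_num : (0:ℝ) ≤ 2), mul_assoc]
    have hfub2 : ∫ p, (∫ x, u (x,p)^2 ∂μG) ∂μI = ∫ z, u z ^ 2 ∂(μG.prod μI) :=
      (fub (huc.pow 2)).symm
    have hfubP : ∫ p, (∫ x, ((fderiv ℝ u (x,p) ((1,0),0))^2
        + (fderiv ℝ u (x,p) ((0,1),0))^2) ∂μG) ∂μI =
        ∫ z, ((fderiv ℝ u z ((1,0),0))^2 + (fderiv ℝ u z ((0,1),0))^2) ∂(μG.prod μI) :=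
      (fub (((hDC hu ((1,0),0)).pow 2).add ((hDC hu ((0,1),0)).pow 2))).symm
    calc ∫ p, Real.sqrt (∫ x, u (x,p)^4 ∂μG) ∂μI
        ≤ ∫ p, Real.sqrt 2 * (Real.sqrt (∫ x, u (x,p)^2 ∂μG) *
            Real.sqrt (∫ x, ((fderiv ℝ u (x,p) ((1,0),0))^2
              + (fderiv ℝ u (x,p) ((0,1),0))^2) ∂μG)) ∂μI :=
          integral_mono (sqrt_int intF4 (nn4 u))
            ((mul_int intpsi intPhi (nn2 u) (nnPhi u)).const_mul _) haf
      _ = Real.sqrt 2 * ∫ p, Real.sqrt (∫ x, u (x,p)^2 ∂μG) *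
            Real.sqrt (∫ x, ((fderiv ℝ u (x,p) ((1,0),0))^2
              + (fderiv ℝ u (x,p) ((0,1),0))^2) ∂μG) ∂μI := integral_const_mul _ _
      _ ≤ Real.sqrt 2 * (Real.sqrt (∫ p, (∫ x, u (x,p)^2 ∂μG) ∂μI) *
            Real.sqrt (∫ p, (∫ x, ((fderiv ℝ u (x,p) ((1,0),0))^2
              + (fderiv ℝ u (x,p) ((0,1),0))^2) ∂μG) ∂μI)) :=
          mul_le_mul_of_nonneg_left (cs_sqrt intpsi intPhi (nn2 u) (nnPhi u))
            (Real.sqrt_nonneg 2)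
      _ = _ := by rw [hfub2, hfubP]
  -- h part
  have hDvc : Continuous fun z : (ℝ×ℝ)×ℝ => fderiv ℝ h z ((0,0),1) := hDC hh _
  have habs2c : Continuous fun z : (ℝ×ℝ)×ℝ => |2 * h z * fderiv ℝ h z ((0,0),1)| :=
    ((continuous_const.mul hhc).mul hDvc).abs
  have intpsih : Integrable (fun p => ∫ x, h (x,p)^2 ∂μG) μI :=
    (intM (hhc.pow 2)).integral_prod_right
  have hK : (∫ z, |h z| * |fderiv ℝ h z ((0,0),1)| ∂(μG.prod μI)) ≤
      Real.sqrt (∫ z, h z ^2 ∂(μG.prod μI)) *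
        Real.sqrt (∫ z, (fderiv ℝ h z ((0,0),1))^2 ∂(μG.prod μI)) :=
    cs_integral _ hhc.aestronglyMeasurable hDvc.aestronglyMeasurable
      (intM (hhc.pow 2)) (intM (hDvc.pow 2))
  have hK0 : 0 ≤ ∫ z, |h z| * |fderiv ℝ h z ((0,0),1)| ∂(μG.prod μI) :=
    integral_nonneg fun z => by positivity
  have hTint : Integrable (fun x : ℝ×ℝ =>
      ∫ r, |2 * h (x,r) * fderiv ℝ h (x,r) ((0,0),1)| ∂μI) μG :=
    (intM habs2c).integral_prod_left
  have hprod2 : ∫ z, |2 * h z * fderiv ℝ h z ((0,0),1)| ∂(μG.prod μI) =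
      ∫ x, (∫ r, |2 * h (x,r) * fderiv ℝ h (x,r) ((0,0),1)| ∂μI) ∂μG :=
    integral_prod _ (intM habs2c)
  have hTeq : (∫ x, (∫ r, |2 * h (x,r) * fderiv ℝ h (x,r) ((0,0),1)| ∂μI) ∂μG)
      = 2 * ∫ z, |h z| * |fderiv ℝ h z ((0,0),1)| ∂(μG.prod μI) := by
    rw [← hprod2,
      show (fun z : (ℝ×ℝ)×ℝ => |2 * h z * fderiv ℝ h z ((0,0),1)|)
        = fun z => 2 * (|h z| * |fderiv ℝ h z ((0,0),1)|) from funext fun z => by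
          rw [abs_mul, abs_mul, abs_two]; ring,
      integral_const_mul]
  have hIoc : volume.restrict (Set.Ioc p0 p1) = μI := by
    rw [hmuI, hIdef]
    exact Measure.restrict_congr_set Ioo_ae_eq_Ioc.symm
  have hptw : ∀ (x : ℝ×ℝ), ∀ p ∈ Set.Ioo p0 p1, ∀ q ∈ Set.Ioo p0 p1,
      h (x,p)^2 ≤ h (x,q)^2
        + ∫ r, |2 * h (x,r) * fderiv ℝ h (x,r) ((0,0),1)| ∂μI := by
    intro x p hp q hq
    have hw : ∀ r, HasDerivAt (fun r => h (x,r)^2)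
        (2 * h (x,r) * fderiv ℝ h (x,r) ((0,0),1)) r := by
      intro r
      have hc : HasDerivAt (fun r : ℝ => ((x, r) : (ℝ×ℝ)×ℝ)) ((((0:ℝ),(0:ℝ)),(1:ℝ))) r :=
        (hasDerivAt_const r x).prodMk (hasDerivAt_id r)
      have hd : HasDerivAt (fun r => h (x, r)) (fderiv ℝ h (x, r) ((0,0),1)) r :=
        (hh.differentiable one_ne_zero (x, r)).hasFDerivAt.comp_hasDerivAt r hc
      simpa using hd.fun_pow 2
    have hcw : Continuous (fun r : ℝ => 2 * h (x,r) * fderiv ℝ h (x,r) ((0,0),1)) :=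
      (continuous_const.mul (hhc.comp (continuous_const.prodMk continuous_id))).mul
        (hDvc.comp (continuous_const.prodMk continuous_id))
    have hftc := ftc_bound hw hcw (a := p0) (b := p1)
      ⟨hp.1.le, hp.2.le⟩ ⟨hq.1.le, hq.2.le⟩
    rwa [show (∫ t in Set.Ioc p0 p1, |2 * h (x,t) * fderiv ℝ h (x,t) ((0,0),1)|)
        = ∫ r, |2 * h (x,r) * fderiv ℝ h (x,r) ((0,0),1)| ∂μI from by rw [hIoc]] at hftc
  have hpsih_bd : ∀ p ∈ I, (∫ x, h (x,p)^2 ∂μG) ≤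
      (∫ z, h z^2 ∂(μG.prod μI)) / (p1 - p0)
        + 2 * ∫ z, |h z| * |fderiv ℝ h z ((0,0),1)| ∂(μG.prod μI) := by
    intro p hp
    rw [hIdef] at hp
    have stepA : ∀ q ∈ Set.Ioo p0 p1, (∫ x, h (x,p)^2 ∂μG) ≤ (∫ x, h (x,q)^2 ∂μG)
        + 2 * ∫ z, |h z| * |fderiv ℝ h z ((0,0),1)| ∂(μG.prod μI) := by
      intro q hq
      have hc1 : Continuous fun x : ℝ×ℝ => h (x,p)^2 :=
        (hhc.comp (continuous_id.prodMk continuous_const)).pow 2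
      have hc2 : Continuous fun x : ℝ×ℝ => h (x,q)^2 :=
        (hhc.comp (continuous_id.prodMk continuous_const)).pow 2
      have hint2 : Integrable (fun x : ℝ×ℝ => h (x,q)^2
          + ∫ r, |2 * h (x,r) * fderiv ℝ h (x,r) ((0,0),1)| ∂μI) μG := (intG hc2).add hTint
      have hmono := integral_mono (μ := μG) (intG hc1) hint2
        (fun x => hptw x p hp q hq)
      rwa [integral_add (intG hc2) hTint, hTeq] at hmono
    have hconst : ∫ (_q : ℝ), (∫ x, h (x,p)^2 ∂μG) ∂μI
        = (p1 - p0) * (∫ x, h (x,p)^2 ∂μG) := by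
      rw [integral_const, measureReal_def, hμIvol, smul_eq_mul]
    have hmono2 : ∫ (_q : ℝ), (∫ x, h (x,p)^2 ∂μG) ∂μI ≤
        ∫ q, ((∫ x, h (x,q)^2 ∂μG)
          + 2 * ∫ z, |h z| * |fderiv ℝ h z ((0,0),1)| ∂(μG.prod μI)) ∂μI := by
      refine integral_mono_ae (integrable_const _) (intpsih.add (integrable_const _)) ?_
      rw [hmuI]
      exact (ae_restrict_iff' hIm).2 (Eventually.of_forall fun q hq => stepA q (by rwa [hIdef] at hq))
    have hadd2 : ∫ q, ((∫ x, h (x,q)^2 ∂μG)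
          + 2 * ∫ z, |h z| * |fderiv ℝ h z ((0,0),1)| ∂(μG.prod μI)) ∂μI
        = (∫ q, (∫ x, h (x,q)^2 ∂μG) ∂μI)
          + (p1-p0) * (2 * ∫ z, |h z| * |fderiv ℝ h z ((0,0),1)| ∂(μG.prod μI)) := by
      rw [integral_add intpsih (integrable_const _), integral_const, measureReal_def, hμIvol, smul_eq_mul]
    have hfubh : ∫ q, (∫ x, h (x,q)^2 ∂μG) ∂μI = ∫ z, h z^2 ∂(μG.prod μI) :=
      (fub (hhc.pow 2)).symm
    have hfin : (p1 - p0) * (∫ x, h (x,p)^2 ∂μG) ≤ (∫ z, h z^2 ∂(μG.prod μI))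
        + (p1-p0) * (2 * ∫ z, |h z| * |fderiv ℝ h z ((0,0),1)| ∂(μG.prod μI)) := by
      rw [← hconst, ← hfubh]
      linarith [hmono2, hadd2]
    have h2 : (∫ x, h (x,p)^2 ∂μG) ≤ ((∫ z, h z^2 ∂(μG.prod μI))
        + (p1-p0) * (2 * ∫ z, |h z| * |fderiv ℝ h z ((0,0),1)| ∂(μG.prod μI))) / (p1-p0) := by
      rw [le_div_iff₀ hL]
      linarith [hfin]
    calc (∫ x, h (x,p)^2 ∂μG) ≤ _ := h2
      _ = (∫ z, h z^2 ∂(μG.prod μI)) / (p1 - p0)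
          + 2 * ∫ z, |h z| * |fderiv ℝ h z ((0,0),1)| ∂(μG.prod μI) := by
        field_simp

  -- main chain
  have lhs_eq : (∫ z in G ×ˢ I, |f z| * |g z| * |h z|) =
      ∫ p, (∫ x, |f (x,p)| * |g (x,p)| * |h (x,p)| ∂μG) ∂μI := by
    rw [← hπ]
    exact fub ((hfc.abs.mul hgc.abs).mul hhc.abs)
  have intF4f : Integrable (fun p => ∫ x, f (x,p)^4 ∂μG) μI :=
    (intM (hfc.pow 4)).integral_prod_right
  have intF4g : Integrable (fun p => ∫ x, g (x,p)^4 ∂μG) μI :=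
    (intM (hgc.pow 4)).integral_prod_right
  have intaf : Integrable (fun p => Real.sqrt (∫ x, f (x,p)^4 ∂μG)) μI :=
    sqrt_int intF4f (nn4 f)
  have intag : Integrable (fun p => Real.sqrt (∫ x, g (x,p)^4 ∂μG)) μI :=
    sqrt_int intF4g (nn4 g)
  have hslice3 : ∀ p ∈ Set.Ioo p0 p1, (∫ x, |f (x,p)| * |g (x,p)| * |h (x,p)| ∂μG) ≤
      Real.sqrt (Real.sqrt (∫ x, f (x,p)^4 ∂μG)) * Real.sqrt (Real.sqrt (∫ x, g (x,p)^4 ∂μG)) *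
        Real.sqrt ((∫ z, h z^2 ∂(μG.prod μI)) / (p1 - p0)
          + 2 * ∫ z, |h z| * |fderiv ℝ h z ((0,0),1)| ∂(μG.prod μI)) := by
    intro p hp
    have hfgc : Continuous fun x : ℝ×ℝ => f (x,p) * g (x,p) :=
      (hfc.comp (continuous_id.prodMk continuous_const)).mul
        (hgc.comp (continuous_id.prodMk continuous_const))
    have hhpc : Continuous fun x : ℝ×ℝ => h (x,p) :=
      hhc.comp (continuous_id.prodMk continuous_const)
    have h1 : (∫ x, |f (x,p)| * |g (x,p)| * |h (x,p)| ∂μG) ≤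
        Real.sqrt (∫ x, (f (x,p) * g (x,p))^2 ∂μG) * Real.sqrt (∫ x, h (x,p)^2 ∂μG) := by
      have hcs := cs_integral μG hfgc.aestronglyMeasurable hhpc.aestronglyMeasurable
        (intG (hfgc.pow 2)) (intG (hhpc.pow 2))
      calc (∫ x, |f (x,p)| * |g (x,p)| * |h (x,p)| ∂μG)
          = ∫ x, |f (x,p) * g (x,p)| * |h (x,p)| ∂μG := by
            refine integral_congr_ae (Eventually.of_forall fun x => ?_)
            show |f (x,p)| * |g (x,p)| * |h (x,p)| = |f (x,p) * g (x,p)| * |h (x,p)|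
            rw [abs_mul]
        _ ≤ _ := hcs
    have hf2c : Continuous fun x : ℝ×ℝ => f (x,p)^2 :=
      (hfc.comp (continuous_id.prodMk continuous_const)).pow 2
    have hg2c : Continuous fun x : ℝ×ℝ => g (x,p)^2 :=
      (hgc.comp (continuous_id.prodMk continuous_const)).pow 2
    have h2 : (∫ x, (f (x,p) * g (x,p))^2 ∂μG) ≤
        Real.sqrt (∫ x, f (x,p)^4 ∂μG) * Real.sqrt (∫ x, g (x,p)^4 ∂μG) := by
      have hcs := cs_integral μG hf2c.aestronglyMeasurable hg2c.aestronglyMeasurable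
        (intG (hf2c.pow 2)) (intG (hg2c.pow 2))
      calc (∫ x, (f (x,p) * g (x,p))^2 ∂μG)
          = ∫ x, |f (x,p)^2| * |g (x,p)^2| ∂μG := by
            refine integral_congr_ae (Eventually.of_forall fun x => ?_)
            show (f (x,p) * g (x,p))^2 = |f (x,p)^2| * |g (x,p)^2|
            rw [abs_of_nonneg (sq_nonneg _), abs_of_nonneg (sq_nonneg _)]
            ring
        _ ≤ Real.sqrt (∫ x, (f (x,p)^2)^2 ∂μG) * Real.sqrt (∫ x, (g (x,p)^2)^2 ∂μG) := hcs
        _ = _ := by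
            rw [show (fun x : ℝ×ℝ => (f (x,p)^2)^2) = fun x => f (x,p)^4 from
                funext fun x => by ring,
              show (fun x : ℝ×ℝ => (g (x,p)^2)^2) = fun x => g (x,p)^4 from
                funext fun x => by ring]
    have h3 : Real.sqrt (∫ x, (f (x,p) * g (x,p))^2 ∂μG) ≤
        Real.sqrt (Real.sqrt (∫ x, f (x,p)^4 ∂μG)) *
          Real.sqrt (Real.sqrt (∫ x, g (x,p)^4 ∂μG)) := by
      calc Real.sqrt (∫ x, (f (x,p) * g (x,p))^2 ∂μG)
          ≤ Real.sqrt (Real.sqrt (∫ x, f (x,p)^4 ∂μG) * Real.sqrt (∫ x, g (x,p)^4 ∂μG)) :=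
            Real.sqrt_le_sqrt h2
        _ = _ := Real.sqrt_mul (Real.sqrt_nonneg _) _
    have h4 : Real.sqrt (∫ x, h (x,p)^2 ∂μG) ≤
        Real.sqrt ((∫ z, h z^2 ∂(μG.prod μI)) / (p1 - p0)
          + 2 * ∫ z, |h z| * |fderiv ℝ h z ((0,0),1)| ∂(μG.prod μI)) :=
      Real.sqrt_le_sqrt (hpsih_bd p (by rwa [hIdef]))
    calc (∫ x, |f (x,p)| * |g (x,p)| * |h (x,p)| ∂μG)
        ≤ Real.sqrt (∫ x, (f (x,p) * g (x,p))^2 ∂μG) * Real.sqrt (∫ x, h (x,p)^2 ∂μG) := h1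
      _ ≤ _ := mul_le_mul h3 h4 (Real.sqrt_nonneg _)
          (mul_nonneg (Real.sqrt_nonneg _) (Real.sqrt_nonneg _))
  have main1 : ∫ p, (∫ x, |f (x,p)| * |g (x,p)| * |h (x,p)| ∂μG) ∂μI ≤
      (∫ p, Real.sqrt (Real.sqrt (∫ x, f (x,p)^4 ∂μG)) *
        Real.sqrt (Real.sqrt (∫ x, g (x,p)^4 ∂μG)) ∂μI) *
        Real.sqrt ((∫ z, h z^2 ∂(μG.prod μI)) / (p1 - p0)
          + 2 * ∫ z, |h z| * |fderiv ℝ h z ((0,0),1)| ∂(μG.prod μI)) := by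
    have hint : Integrable (fun p => Real.sqrt (Real.sqrt (∫ x, f (x,p)^4 ∂μG)) *
        Real.sqrt (Real.sqrt (∫ x, g (x,p)^4 ∂μG)) *
        Real.sqrt ((∫ z, h z^2 ∂(μG.prod μI)) / (p1 - p0)
          + 2 * ∫ z, |h z| * |fderiv ℝ h z ((0,0),1)| ∂(μG.prod μI))) μI :=
      (mul_int intaf intag (fun p => Real.sqrt_nonneg _)
        (fun p => Real.sqrt_nonneg _)).mul_const _
    have hmono := integral_mono_of_nonneg
      (f := fun p => ∫ x, |f (x,p)| * |g (x,p)| * |h (x,p)| ∂μG) (μ := μI)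
      (Eventually.of_forall fun p => integral_nonneg fun x =>
        mul_nonneg (mul_nonneg (abs_nonneg _) (abs_nonneg _)) (abs_nonneg _)) hint ?_
    · rwa [integral_mul_const] at hmono
    · rw [hmuI]
      exact (ae_restrict_iff' hIm).2 (Eventually.of_forall fun p hp =>
        hslice3 p (by rwa [hIdef] at hp))
  have main2 : ∫ p, Real.sqrt (Real.sqrt (∫ x, f (x,p)^4 ∂μG)) *
      Real.sqrt (Real.sqrt (∫ x, g (x,p)^4 ∂μG)) ∂μI ≤
      Real.sqrt (∫ p, Real.sqrt (∫ x, f (x,p)^4 ∂μG) ∂μI) *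
        Real.sqrt (∫ p, Real.sqrt (∫ x, g (x,p)^4 ∂μG) ∂μI) :=
    cs_sqrt intaf intag (fun p => Real.sqrt_nonneg _) (fun p => Real.sqrt_nonneg _)
  have keyf := keyL4 f hf hfc hf0
  have keyg := keyL4 g hg hgc hg0
  -- scalar abbreviations
  set Sf := ∫ z, f z ^ 2 ∂(μG.prod μI) with hSfdef
  set Qf := ∫ z, ((fderiv ℝ f z ((1,0),0))^2 + (fderiv ℝ f z ((0,1),0))^2) ∂(μG.prod μI)
    with hQfdef
  set Sg := ∫ z, g z ^ 2 ∂(μG.prod μI) with hSgdef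
  set Qg := ∫ z, ((fderiv ℝ g z ((1,0),0))^2 + (fderiv ℝ g z ((0,1),0))^2) ∂(μG.prod μI)
    with hQgdef
  set Sh := ∫ z, h z ^ 2 ∂(μG.prod μI) with hShdef
  set Qv := ∫ z, (fderiv ℝ h z ((0,0),1))^2 ∂(μG.prod μI) with hQvdef
  set K := ∫ z, |h z| * |fderiv ℝ h z ((0,0),1)| ∂(μG.prod μI) with hKdef
  set Af := ∫ p, Real.sqrt (∫ x, f (x,p)^4 ∂μG) ∂μI with hAfdef
  set Ag := ∫ p, Real.sqrt (∫ x, g (x,p)^4 ∂μG) ∂μI with hAgdef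
  have hSf0 : 0 ≤ Sf := by rw [hSfdef]; exact integral_nonneg fun z => sq_nonneg _
  have hSg0 : 0 ≤ Sg := by rw [hSgdef]; exact integral_nonneg fun z => sq_nonneg _
  have hSh0 : 0 ≤ Sh := by rw [hShdef]; exact integral_nonneg fun z => sq_nonneg _
  have hQv0 : 0 ≤ Qv := by rw [hQvdef]; exact integral_nonneg fun z => sq_nonneg _
  -- identify the norms
  have hNf : L2normOn (G ×ˢ I) f = Real.sqrt Sf := by
    simp only [L2normOn]; rw [← hπ, hSfdef]
  have hNg : L2normOn (G ×ˢ I) g = Real.sqrt Sg := by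
    simp only [L2normOn]; rw [← hπ, hSgdef]
  have hNh : L2normOn (G ×ˢ I) h = Real.sqrt Sh := by
    simp only [L2normOn]; rw [← hπ, hShdef]
  have hDf : gradHnormOn (G ×ˢ I) f = Real.sqrt Qf := by
    simp only [gradHnormOn]; rw [← hπ, hQfdef]
  have hDg : gradHnormOn (G ×ˢ I) g = Real.sqrt Qg := by
    simp only [gradHnormOn]; rw [← hπ, hQgdef]
  have hVh : vertDnormOn (G ×ˢ I) h = Real.sqrt Qv := by
    simp only [vertDnormOn]; rw [← hπ, hQvdef]
  -- scalar estimates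
  have u1 : Real.sqrt Af ≤ Real.sqrt (Real.sqrt 2) *
      (Real.sqrt (Real.sqrt Sf) * Real.sqrt (Real.sqrt Qf)) := by
    calc Real.sqrt Af ≤ Real.sqrt (Real.sqrt 2 * (Real.sqrt Sf * Real.sqrt Qf)) :=
        Real.sqrt_le_sqrt keyf
      _ = _ := by
        rw [Real.sqrt_mul (Real.sqrt_nonneg 2), Real.sqrt_mul (Real.sqrt_nonneg Sf)]
  have u2 : Real.sqrt Ag ≤ Real.sqrt (Real.sqrt 2) *
      (Real.sqrt (Real.sqrt Sg) * Real.sqrt (Real.sqrt Qg)) := by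
    calc Real.sqrt Ag ≤ Real.sqrt (Real.sqrt 2 * (Real.sqrt Sg * Real.sqrt Qg)) :=
        Real.sqrt_le_sqrt keyg
      _ = _ := by
        rw [Real.sqrt_mul (Real.sqrt_nonneg 2), Real.sqrt_mul (Real.sqrt_nonneg Sg)]
  have c1 : Real.sqrt Af * Real.sqrt Ag ≤
      Real.sqrt 2 * (Real.sqrt (Real.sqrt Sf) * Real.sqrt (Real.sqrt Qf) *
        (Real.sqrt (Real.sqrt Sg) * Real.sqrt (Real.sqrt Qg))) := by
    have hmm := mul_le_mul u1 u2 (Real.sqrt_nonneg _) (by positivity)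
    calc Real.sqrt Af * Real.sqrt Ag ≤ _ := hmm
      _ = _ := by
        rw [show Real.sqrt (Real.sqrt 2) * (Real.sqrt (Real.sqrt Sf) * Real.sqrt (Real.sqrt Qf)) *
            (Real.sqrt (Real.sqrt 2) * (Real.sqrt (Real.sqrt Sg) * Real.sqrt (Real.sqrt Qg)))
            = (Real.sqrt (Real.sqrt 2) * Real.sqrt (Real.sqrt 2)) *
              (Real.sqrt (Real.sqrt Sf) * Real.sqrt (Real.sqrt Qf) *
                (Real.sqrt (Real.sqrt Sg) * Real.sqrt (Real.sqrt Qg))) from by ring,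
          Real.mul_self_sqrt (Real.sqrt_nonneg 2)]
  have hK2 : Real.sqrt (2 * K) ≤ Real.sqrt 2 *
      (Real.sqrt (Real.sqrt Sh) * Real.sqrt (Real.sqrt Qv)) := by
    calc Real.sqrt (2 * K) = Real.sqrt 2 * Real.sqrt K :=
        Real.sqrt_mul (by norm_num) _
      _ ≤ Real.sqrt 2 * Real.sqrt (Real.sqrt Sh * Real.sqrt Qv) :=
        mul_le_mul_of_nonneg_left (Real.sqrt_le_sqrt hK) (Real.sqrt_nonneg 2)
      _ = _ := by rw [Real.sqrt_mul (Real.sqrt_nonneg _)]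
  have c2 : Real.sqrt (Sh / (p1 - p0) + 2 * K) ≤
      Real.sqrt Sh / Real.sqrt (p1 - p0) + Real.sqrt 2 *
        (Real.sqrt (Real.sqrt Sh) * Real.sqrt (Real.sqrt Qv)) := by
    calc Real.sqrt (Sh / (p1 - p0) + 2 * K)
        ≤ Real.sqrt (Sh / (p1 - p0)) + Real.sqrt (2 * K) :=
          sqrt_add_le (div_nonneg hSh0 hL.le) (mul_nonneg (by norm_num) hK0)
      _ ≤ _ := by
        rw [Real.sqrt_div hSh0]
        exact add_le_add le_rfl hK2
  have c3 : Real.sqrt Sh / Real.sqrt (p1 - p0) + Real.sqrt 2 *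
      (Real.sqrt (Real.sqrt Sh) * Real.sqrt (Real.sqrt Qv)) ≤
      (Real.sqrt 2 + 1 / Real.sqrt (p1 - p0)) *
        (Real.sqrt (Real.sqrt Sh) * Real.sqrt (Real.sqrt Qv) + Real.sqrt Sh) := by
    have e : (Real.sqrt 2 + 1 / Real.sqrt (p1 - p0)) *
        (Real.sqrt (Real.sqrt Sh) * Real.sqrt (Real.sqrt Qv) + Real.sqrt Sh)
        = Real.sqrt 2 * (Real.sqrt (Real.sqrt Sh) * Real.sqrt (Real.sqrt Qv))
          + Real.sqrt 2 * Real.sqrt Sh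
          + (Real.sqrt (Real.sqrt Sh) * Real.sqrt (Real.sqrt Qv)) / Real.sqrt (p1 - p0)
          + Real.sqrt Sh / Real.sqrt (p1 - p0) := by ring
    rw [e]
    have n1 : 0 ≤ Real.sqrt 2 * Real.sqrt Sh := by positivity
    have n2 : 0 ≤ (Real.sqrt (Real.sqrt Sh) * Real.sqrt (Real.sqrt Qv)) /
        Real.sqrt (p1 - p0) := by positivity
    linarith
  -- finish
  rw [hDf, hNf, hDg, hNg, hNh, hVh, lhs_eq]
  simp only [← Real.sqrt_eq_rpow]
  calc ∫ p, (∫ x, |f (x,p)| * |g (x,p)| * |h (x,p)| ∂μG) ∂μI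
      ≤ (∫ p, Real.sqrt (Real.sqrt (∫ x, f (x,p)^4 ∂μG)) *
          Real.sqrt (Real.sqrt (∫ x, g (x,p)^4 ∂μG)) ∂μI) *
          Real.sqrt (Sh / (p1 - p0) + 2 * K) := main1
    _ ≤ (Real.sqrt Af * Real.sqrt Ag) * Real.sqrt (Sh / (p1 - p0) + 2 * K) :=
        mul_le_mul_of_nonneg_right main2 (Real.sqrt_nonneg _)
    _ ≤ (Real.sqrt 2 * (Real.sqrt (Real.sqrt Sf) * Real.sqrt (Real.sqrt Qf) *
          (Real.sqrt (Real.sqrt Sg) * Real.sqrt (Real.sqrt Qg)))) *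
        ((Real.sqrt 2 + 1 / Real.sqrt (p1 - p0)) *
          (Real.sqrt (Real.sqrt Sh) * Real.sqrt (Real.sqrt Qv) + Real.sqrt Sh)) :=
        mul_le_mul c1 (c2.trans c3) (Real.sqrt_nonneg _) (by positivity)
    _ = Real.sqrt 2 * (Real.sqrt 2 + 1 / Real.sqrt (p1 - p0)) *
          Real.sqrt (Real.sqrt Qf) * Real.sqrt (Real.sqrt Sf) *
          Real.sqrt (Real.sqrt Qg) * Real.sqrt (Real.sqrt Sg) *
          (Real.sqrt (Real.sqrt Sh) * Real.sqrt (Real.sqrt Qv) + Real.sqrt Sh) := by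
        ring
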